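/- Let N be a squarefree positive integer and let c, d be divisors of N. Setting e := gcd(c,d) · gcd(N/c, N/d), one has N · gcd(d, e)² = c · d · e. Equivalently, c = N · gcd(d,e)² / (d·e). -/

import Mathlib

theorem sudoku_identity (N c d : ℕ) (hN : Squarefree N)
    (hc : c ∣ N) (hd : d ∣ N) :
    N * Nat.gcd d (Nat.gcd c d * Nat.gcd (N / c) (N / d)) ^ 2 =
      c * d * (Nat.gcd c d * Nat.gcd (N / c) (N / d)) := by
  have hN0 : N ≠ 0 := hN.ne_zero
  have hc0 : c ≠ 0 := by rintro rfl; exact hN0 (Nat.eq_zero_of_zero_dvd hc)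
  have hd0 : d ≠ 0 := by rintro rfl; exact hN0 (Nat.eq_zero_of_zero_dvd hd)
  have hnc0 : N / c ≠ 0 :=
    Nat.div_ne_zero_iff.2 ⟨hc0, Nat.le_of_dvd (Nat.pos_of_ne_zero hN0) hc⟩
  have hnd0 : N / d ≠ 0 :=
    Nat.div_ne_zero_iff.2 ⟨hd0, Nat.le_of_dvd (Nat.pos_of_ne_zero hN0) hd⟩
  have hg1 : Nat.gcd c d ≠ 0 := Nat.gcd_ne_zero_left hc0
  have hg2 : Nat.gcd (N / c) (N / d) ≠ 0 := Nat.gcd_ne_zero_left hnc0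
  have he0 : Nat.gcd c d * Nat.gcd (N / c) (N / d) ≠ 0 := mul_ne_zero hg1 hg2
  have hg3 : Nat.gcd d (Nat.gcd c d * Nat.gcd (N / c) (N / d)) ≠ 0 :=
    Nat.gcd_ne_zero_left hd0
  have hL : N * Nat.gcd d (Nat.gcd c d * Nat.gcd (N / c) (N / d)) ^ 2 ≠ 0 :=
    mul_ne_zero hN0 (pow_ne_zero 2 hg3)
  have hR : c * d * (Nat.gcd c d * Nat.gcd (N / c) (N / d)) ≠ 0 :=
    mul_ne_zero (mul_ne_zero hc0 hd0) he0
  apply Nat.factorization_inj (by simpa using hL) (by simpa using hR)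
  ext p
  rw [Nat.factorization_mul hN0 (pow_ne_zero 2 hg3),
    Nat.factorization_mul (mul_ne_zero hc0 hd0) he0, Nat.factorization_mul hc0 hd0,
    Nat.factorization_pow, Nat.factorization_gcd hd0 he0, Nat.factorization_mul hg1 hg2,
    Nat.factorization_gcd hc0 hd0, Nat.factorization_gcd hnc0 hnd0,
    Nat.factorization_div hc, Nat.factorization_div hd]
  have hca : c.factorization p ≤ N.factorization p :=
    (Nat.factorization_le_iff_dvd hc0 hN0).2 hc p
  have hdb : d.factorization p ≤ N.factorization p :=
    (Nat.factorization_le_iff_dvd hd0 hN0).2 hd p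
  have hsq : N.factorization p ≤ 1 := hN.natFactorization_le_one p
  simp only [Finsupp.add_apply, Finsupp.smul_apply, Finsupp.inf_apply, Finsupp.tsub_apply,
    smul_eq_mul]
  omega
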